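/- arXiv:1911.12232 — 3 statements merged into one kernel-verified Lean document; each statement's English description precedes it below -/
import Mathlib

section
/- Let G be a finite group, let 𝒳 be a partition of Irr(G), and let 𝒦 be a partition of Con(G) such that (𝒳, 𝒦) is a supercharacter theory of G. If some part X ∈ 𝒳 is a bad part, then every member of 𝒦 is a singleton conjugacy class and 𝒳 is the partition of Irr(G) into singletons. In particular, a partition 𝒳 of Irr(G) that contains a bad part and also contains some part of size at least 2 admits no partition 𝒦 of Con(G) making (𝒳, 𝒦) a supercharacter theory. -/
open scoped BigOperators

/-- `σ_X(g) = ∑_{χ ∈ X} χ(1)·χ(g)`. -/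
noncomputable def sigmaCF {G : Type} [Group G] (X : Set (G → ℂ)) (g : G) : ℂ :=
  ∑ᶠ χ ∈ X, χ 1 * χ g

/-- `f` is the character of some irreducible (simple) complex representation of `G`. -/
def IsIrrChar (G : Type) [Group G] (f : G → ℂ) : Prop :=
  ∃ V : FDRep ℂ G, CategoryTheory.Simple V ∧ FDRep.character V = f

/-- The set of irreducible complex characters of `G`. -/
def Irr (G : Type) [Group G] : Set (G → ℂ) := {f | IsIrrChar G f}

/-- The trivial character of `G`. -/
def trivChar (G : Type) [Group G] : G → ℂ := fun _ => 1

/-- `X ⊆ Irr(G)` and `S ⊆ Con(G)` are consistent if `σ_X` takes the same value on all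
conjugacy classes belonging to `S`. -/
def Consistent {G : Type} [Group G] (X : Set (G → ℂ)) (S : Set (ConjClasses G)) : Prop :=
  ∀ x y : G, ConjClasses.mk x ∈ S → ConjClasses.mk y ∈ S → sigmaCF X x = sigmaCF X y

/-- `X` is a bad part: every nonempty subset of `Con(G)` consistent with `X` is a singleton. -/
def IsBadPart {G : Type} [Group G] (X : Set (G → ℂ)) : Prop :=
  ∀ S : Set (ConjClasses G), S.Nonempty → Consistent X S → ∃ K, S = {K}

/-- A supercharacter theory of `G`: `𝒳` is a partition of `Irr(G)`, `𝒦` is a partition of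
`Con(G)` containing `{e}` as a part, `|𝒳| = |𝒦|`, and every part of `𝒳` is consistent with
every part of `𝒦`. -/
structure IsSCT (G : Type) [Group G] (𝒳 : Set (Set (G → ℂ)))
    (𝒦 : Set (Set (ConjClasses G))) : Prop where
  nonemptyX : ∀ X ∈ 𝒳, X.Nonempty
  pairwiseX : 𝒳.Pairwise Disjoint
  unionX : ⋃₀ 𝒳 = Irr G
  nonemptyK : ∀ S ∈ 𝒦, S.Nonempty
  pairwiseK : 𝒦.Pairwise Disjoint
  unionK : ⋃₀ 𝒦 = Set.univ
  idClassMem : {ConjClasses.mk (1 : G)} ∈ 𝒦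
  cardEq : 𝒳.ncard = 𝒦.ncard
  consistentPairs : ∀ X ∈ 𝒳, ∀ S ∈ 𝒦, Consistent X S

/-- A set partition of a type `α`. -/
def IsSetPartition {α : Type} (P : Set (Set α)) : Prop :=
  (∀ A ∈ P, A.Nonempty) ∧ P.Pairwise Disjoint ∧ ⋃₀ P = Set.univ

/-- The `n`-th Bell number: the number of set partitions of an `n`-element set. -/
noncomputable def bell (n : ℕ) : ℕ :=
  Nat.card {P : Set (Set (Fin n)) // IsSetPartition P}

lemma irr_classFun {G : Type} [Group G] {f : G → ℂ} (hf : f ∈ Irr G) {x y : G}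
    (hc : IsConj x y) : f x = f y := by
  obtain ⟨V, _, rfl⟩ := hf
  obtain ⟨c, hc⟩ := isConj_iff.mp hc
  rw [← hc, mul_assoc, FDRep.char_mul_comm]
  simp

lemma irr_pairing {G : Type} [Group G] [Fintype G] {f g : G → ℂ}
    (hf : f ∈ Irr G) (hg : g ∈ Irr G) :
    ∑ x : G, f x * g x⁻¹ = if f = g then (Fintype.card G : ℂ) else 0 := by
  obtain ⟨V, hV, rfl⟩ := hf
  obtain ⟨W, hW, rfl⟩ := hg
  haveI := hV; haveI := hW
  haveI : Invertible (Nat.card G : ℂ) := invertibleOfNonzero (by exact_mod_cast Nat.card_pos.ne')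
  by_cases hfg : FDRep.character V = FDRep.character W
  · have horth := FDRep.char_orthonormal (k := ℂ) (G := G) V V
    rw [if_pos ⟨CategoryTheory.Iso.refl V⟩] at horth
    have horth' : (Fintype.card G : ℂ)⁻¹ • (∑ x : G, FDRep.character V x * FDRep.character V x⁻¹)
        = (1 : ℂ) := by rw [smul_eq_mul, ← Nat.card_eq_fintype_card]; exact horth
    have h2 := congrArg (fun z => (Fintype.card G : ℂ) • z) horth'
    simp only [smul_inv_smul₀ (show (Fintype.card G : ℂ) ≠ 0 by exact_mod_cast Fintype.card_ne_zero)] at h2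
    rw [if_pos hfg, ← hfg, h2]
    simp
  · have horth := FDRep.char_orthonormal (k := ℂ) (G := G) V W
    rw [if_neg (fun ⟨i⟩ => hfg (FDRep.char_iso i))] at horth
    have horth' : (Fintype.card G : ℂ)⁻¹ • (∑ x : G, FDRep.character V x * FDRep.character W x⁻¹)
        = (0 : ℂ) := by rw [smul_eq_mul, ← Nat.card_eq_fintype_card]; exact horth
    have h2 := congrArg (fun z => (Fintype.card G : ℂ) • z) horth'
    simp only [smul_inv_smul₀ (show (Fintype.card G : ℂ) ≠ 0 by exact_mod_cast Fintype.card_ne_zero)] at h2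
    rw [if_neg hfg, h2]
    simp

lemma linearIndependent_irr (G : Type) [Group G] [Finite G] :
    LinearIndependent ℂ (fun f : Irr G => (f : G → ℂ)) := by
  classical
  cases nonempty_fintype G
  rw [linearIndependent_iff']
  intro s c hsum j hj
  have key := congrArg (fun F : G → ℂ => ∑ x : G, F x * (j : G → ℂ) x⁻¹) hsum
  simp only [Finset.sum_apply, Pi.smul_apply, smul_eq_mul, Pi.zero_apply, zero_mul,
    Finset.sum_mul, Finset.sum_const_zero] at key
  rw [Finset.sum_comm] at key
  have key2 : ∑ i ∈ s, c i * ∑ x : G, (i : G → ℂ) x * (j : G → ℂ) x⁻¹ = 0 := by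
    have hre : ∑ i ∈ s, c i * ∑ x : G, (i : G → ℂ) x * (j : G → ℂ) x⁻¹
        = ∑ i ∈ s, ∑ x : G, c i * (i : G → ℂ) x * (j : G → ℂ) x⁻¹ := by
      refine Finset.sum_congr rfl fun i _ => ?_
      rw [Finset.mul_sum]
      exact Finset.sum_congr rfl fun x _ => (mul_assoc _ _ _).symm
    rw [hre, key]
  have key3 : ∑ i ∈ s, (if i = j then c i * (Fintype.card G : ℂ) else 0) = 0 := by
    have hre2 : ∑ i ∈ s, (if i = j then c i * (Fintype.card G : ℂ) else 0)
        = ∑ i ∈ s, c i * ∑ x : G, (i : G → ℂ) x * (j : G → ℂ) x⁻¹ := by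
      refine Finset.sum_congr rfl fun i _ => ?_
      rw [irr_pairing i.2 j.2]
      by_cases hij : i = j
      · rw [if_pos hij, if_pos (by rw [hij])]
      · rw [if_neg hij, if_neg (fun hc => hij (Subtype.coe_injective hc)), mul_zero]
    rw [hre2]
    exact key2
  rw [Finset.sum_ite_eq' s j, if_pos hj] at key3
  have hcard : (Fintype.card G : ℂ) ≠ 0 := by
    exact_mod_cast (Fintype.card_ne_zero : Fintype.card G ≠ 0)
  exact (mul_eq_zero.mp key3).resolve_right hcard

lemma linearIndependent_irr_lift (G : Type) [Group G] [Finite G] :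
    LinearIndependent ℂ (fun f : Irr G => (fun c : ConjClasses G => (f : G → ℂ) c.out)) := by
  apply LinearIndependent.of_comp (LinearMap.funLeft ℂ ℂ (ConjClasses.mk : G → ConjClasses G))
  have hcomp : (⇑(LinearMap.funLeft ℂ ℂ (ConjClasses.mk : G → ConjClasses G)) ∘
      fun f : Irr G => (fun c : ConjClasses G => (f : G → ℂ) c.out))
      = fun f : Irr G => (f : G → ℂ) := by
    funext f x
    simp only [Function.comp_apply, LinearMap.funLeft_apply]
    refine irr_classFun f.2 ?_
    rw [← ConjClasses.mk_eq_mk_iff_isConj]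
    exact Quotient.out_eq _
  rw [hcomp]
  exact linearIndependent_irr G

lemma finite_irr (G : Type) [Group G] [Finite G] : Finite (Irr G) := by
  cases nonempty_fintype G
  exact (linearIndependent_irr G).finite

lemma card_irr_le (G : Type) [Group G] [Finite G] :
    Nat.card (Irr G) ≤ Nat.card (ConjClasses G) := by
  classical
  cases nonempty_fintype G
  haveI : Fintype (ConjClasses G) := Fintype.ofFinite _
  haveI : Finite (Irr G) := finite_irr G
  haveI : Fintype (Irr G) := Fintype.ofFinite _
  have h := (linearIndependent_irr_lift G).fintype_card_le_finrank
  rw [Module.finrank_pi] at h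
  rw [Nat.card_eq_fintype_card, Nat.card_eq_fintype_card]
  exact h

/-- a supercharacter theory whose character partition contains a bad part is
forced to be the partition into singletons on both sides. -/
theorem stmt_1 {G : Type} [Group G] [Finite G]
    (𝒳 : Set (Set (G → ℂ))) (𝒦 : Set (Set (ConjClasses G)))
    (h : IsSCT G 𝒳 𝒦)
    (X : Set (G → ℂ)) (hX : X ∈ 𝒳) (hXsub : X ⊆ Irr G \ {trivChar G})
    (hbad : IsBadPart X) :
    (∀ S ∈ 𝒦, ∃ K : ConjClasses G, S = {K}) ∧
    (∀ Y ∈ 𝒳, ∃ f : G → ℂ, Y = {f}) := by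
  classical
  have part1 : ∀ S ∈ 𝒦, ∃ K : ConjClasses G, S = {K} :=
    fun S hS => hbad S (h.nonemptyK S hS) (h.consistentPairs X hX S hS)
  refine ⟨part1, ?_⟩
  haveI : Finite (Irr G) := finite_irr G
  choose kk hkk using part1
  have hbij : Function.Bijective (fun S : ↥𝒦 => kk S.1 S.2) := by
    constructor
    · intro a b hab
      apply Subtype.ext
      rw [hkk a.1 a.2, hkk b.1 b.2]
      simp only at hab
      rw [hab]
    · intro K
      obtain ⟨S, hS, hKS⟩ := Set.mem_sUnion.mp (show K ∈ ⋃₀ 𝒦 by rw [h.unionK]; trivial)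
      refine ⟨⟨S, hS⟩, ?_⟩
      rw [hkk S hS] at hKS
      exact (Set.mem_singleton_iff.mp hKS).symm
  have hcardK : Nat.card ↥𝒦 = Nat.card (ConjClasses G) := Nat.card_eq_of_bijective _ hbij
  have hmem : ∀ Z ∈ 𝒳, ∀ g ∈ Z, g ∈ Irr G := by
    intro Z hZ g hg
    rw [← h.unionX]
    exact ⟨Z, hZ, hg⟩
  choose p hp using h.nonemptyX
  have hdisj : ∀ {A B : Set (G → ℂ)}, A ∈ 𝒳 → B ∈ 𝒳 → A ≠ B → ∀ {a}, a ∈ A → a ∉ B := by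
    intro A B hA hB hAB a ha
    exact Set.disjoint_left.mp (h.pairwiseX hA hB hAB) ha
  haveI hfinX : Finite ↥𝒳 := by
    apply Finite.of_injective
      (fun Z : ↥𝒳 => (⟨p Z.1 Z.2, hmem Z.1 Z.2 _ (hp Z.1 Z.2)⟩ : ↥(Irr G)))
    intro a b hab
    simp only [Subtype.mk.injEq] at hab
    by_contra hne
    exact (hdisj a.2 b.2 (fun he => hne (Subtype.ext he)) (hp a.1 a.2)) (hab ▸ hp b.1 b.2)
  intro Y hY
  by_contra hns
  push_neg at hns
  obtain ⟨f, hf⟩ := h.nonemptyX Y hY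
  have hex : ∃ f' ∈ Y, f' ≠ f := by
    by_contra hall
    push_neg at hall
    exact hns f (Set.eq_singleton_iff_unique_mem.mpr ⟨hf, hall⟩)
  obtain ⟨f', hf', hff'⟩ := hex
  have hFmem : ∀ o : Option ↥𝒳,
      o.elim f' (fun Z => if Z.1 = Y then f else p Z.1 Z.2) ∈ Irr G := by
    rintro (_ | ⟨Z, hZ⟩)
    · exact hmem Y hY f' hf'
    · dsimp only [Option.elim]
      by_cases hZY : Z = Y
      · rw [if_pos hZY]; exact hmem Y hY f hf
      · rw [if_neg hZY]; exact hmem Z hZ _ (hp Z hZ)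
  have hFinj : Function.Injective
      (fun o : Option ↥𝒳 => o.elim f' (fun Z => if Z.1 = Y then f else p Z.1 Z.2)) := by
    rintro (_ | ⟨Z, hZ⟩) (_ | ⟨W, hW⟩) hFW <;> simp only [Option.elim] at hFW
    · rfl
    · exfalso
      by_cases hWY : W = Y
      · rw [if_pos hWY] at hFW; exact hff' hFW
      · rw [if_neg hWY] at hFW
        exact hdisj hY hW (fun hYW => hWY hYW.symm) hf'
          (show f' ∈ W by rw [hFW]; exact hp W hW)
    · exfalso
      by_cases hZY : Z = Y
      · rw [if_pos hZY] at hFW; exact hff' hFW.symm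
      · rw [if_neg hZY] at hFW
        exact hdisj hY hZ (fun hYZ => hZY hYZ.symm) hf'
          (show f' ∈ Z by rw [← hFW]; exact hp Z hZ)
    · by_cases hZY : Z = Y <;> by_cases hWY : W = Y
      · subst hZY; subst hWY; rfl
      · exfalso
        rw [if_pos hZY, if_neg hWY] at hFW
        exact hdisj hY hW (fun hYW => hWY hYW.symm) (hZY ▸ hf)
          (show f ∈ W by rw [hFW]; exact hp W hW)
      · exfalso
        rw [if_neg hZY, if_pos hWY] at hFW
        exact hdisj hY hZ (fun hYZ => hZY hYZ.symm) (hWY ▸ hf)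
          (show f ∈ Z by rw [← hFW]; exact hp Z hZ)
      · rw [if_neg hZY, if_neg hWY] at hFW
        have hZW : Z = W := by
          by_contra hne
          exact (hdisj hZ hW hne (hp Z hZ)) (hFW ▸ hp W hW)
        subst hZW
        rfl
  have hcount : Nat.card (Option ↥𝒳) ≤ Nat.card ↥(Irr G) :=
    Nat.card_le_card_of_injective
      (fun o : Option ↥𝒳 => (⟨_, hFmem o⟩ : ↥(Irr G)))
      (fun a b hab => hFinj (congrArg Subtype.val hab))
  rw [Finite.card_option] at hcount
  have h1 : Nat.card ↥(Irr G) ≤ Nat.card (ConjClasses G) := card_irr_le G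
  have h2 : Nat.card (ConjClasses G) = Nat.card ↥𝒳 := by
    rw [← hcardK, Nat.card_coe_set_eq, Nat.card_coe_set_eq, h.cardEq]
  omega
end

section
/- Let G be a finite group and let 𝒳 be a partition of Irr(G). If (𝒳, 𝒦) and (𝒳, 𝒦') are both supercharacter theories of G, then 𝒦 = 𝒦'. In other words, a partition of Irr(G) admits at most one partition of Con(G) making the pair a supercharacter theory. -/
open scoped BigOperators

open Classical in
noncomputable def pairB {G : Type} [Group G] [Fintype G] (f g : G → ℂ) : ℂ :=
  ∑ x : G, f x * g x⁻¹

variable {G : Type} [Group G] [Fintype G]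

open Classical in
lemma pairB_char (V W : FDRep ℂ G) (hV : CategoryTheory.Simple V)
    (hW : CategoryTheory.Simple W) :
    pairB (FDRep.character V) (FDRep.character W) =
      (Fintype.card G : ℂ) * (if Nonempty (V ≅ W) then (1:ℂ) else 0) := by
  letI : Invertible (Nat.card G : ℂ) :=
    invertibleOfNonzero (by exact_mod_cast (Nat.card_pos (α := G)).ne')
  have key := @FDRep.char_orthonormal ℂ _ G _ _ _ _ V W hV hW
  have h2 := congrArg (fun z => (Nat.card G : ℂ) * z) key
  simp only [smul_eq_mul, ← mul_assoc, mul_inv_cancel₀ (by exact_mod_cast (Nat.card_pos (α := G)).ne' : (Nat.card G : ℂ) ≠ 0), one_mul] at h2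
  have h3 : pairB (FDRep.character V) (FDRep.character W)
      = ∑ g : G, V.character g * W.character g⁻¹ := rfl
  rw [h3, h2, Nat.card_eq_fintype_card]

open Classical in
lemma pairB_irr {f g : G → ℂ} (hf : IsIrrChar G f) (hg : IsIrrChar G g) :
    pairB f g = if f = g then (Fintype.card G : ℂ) else 0 := by
  obtain ⟨V, hV, rfl⟩ := hf
  obtain ⟨W, hW, rfl⟩ := hg
  rw [pairB_char V W hV hW]
  by_cases hiso : Nonempty (V ≅ W)
  · have : FDRep.character V = FDRep.character W := FDRep.char_iso hiso.some
    simp [hiso, this]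
  · simp only [hiso, if_false, mul_zero]
    rw [if_neg]
    intro hch
    have h1 := pairB_char V V hV hV
    have h2 := pairB_char V W hV hW
    rw [hch] at h2
    rw [if_neg hiso, mul_zero] at h2
    rw [hch] at h1
    rw [h2, if_pos ⟨CategoryTheory.Iso.refl V⟩, mul_one] at h1
    exact (Fintype.card_ne_zero (α := G)) (by exact_mod_cast h1.symm)

lemma irr_one_ne_zero {f : G → ℂ} (hf : IsIrrChar G f) : f 1 ≠ 0 := by
  intro h0
  obtain ⟨V, hV, rfl⟩ := hf
  rw [FDRep.char_one] at h0
  have hfr : Module.finrank ℂ V = 0 := by exact_mod_cast h0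
  haveI : Subsingleton V := Module.finrank_zero_iff.mp hfr
  have hzero : FDRep.character V = fun _ => 0 := by
    funext g
    have : V.ρ g = 0 := Subsingleton.elim _ _
    simp [FDRep.character, this]
  have := pairB_irr ⟨V, hV, rfl⟩ ⟨V, hV, rfl⟩
  rw [if_pos rfl, hzero] at this
  simp [pairB] at this
  exact (Fintype.card_ne_zero (α := G)) (by exact_mod_cast this.symm)

lemma pairB_finsetsum {ι : Type*} (s : Finset ι) (F : ι → (G → ℂ)) (g : G → ℂ) :
    pairB (∑ i ∈ s, F i) g = ∑ i ∈ s, pairB (F i) g := by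
  simp only [pairB, Finset.sum_apply, Finset.sum_mul]
  rw [Finset.sum_comm]

lemma pairB_smul (c : ℂ) (f g : G → ℂ) : pairB (c • f) g = c * pairB f g := by
  simp [pairB, Finset.mul_sum, mul_assoc]

lemma pairB_zero (g : G → ℂ) : pairB (0 : G → ℂ) g = 0 := by simp [pairB]

lemma irr_finite : (Irr G).Finite := by
  apply LinearIndependent.setFinite (R := ℂ)
  rw [linearIndependent_iff']
  intro s c hsum i hi
  have h1 : pairB (∑ j ∈ s, c j • (j : G → ℂ)) (i : G → ℂ) = 0 := by rw [hsum, pairB_zero]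
  rw [pairB_finsetsum] at h1
  classical
  have h2 : ∀ j ∈ s, c j * pairB (j : G → ℂ) (i : G → ℂ)
      = if j = i then c j * (Fintype.card G : ℂ) else 0 := by
    intro j hj
    rw [pairB_irr j.2 i.2]
    by_cases hji : j = i
    · simp [hji]
    · have : (j : G → ℂ) ≠ (i : G → ℂ) := fun hc => hji (Subtype.coe_injective hc)
      simp [this, hji]
  simp only [pairB_smul] at h1
  rw [Finset.sum_congr rfl h2, Finset.sum_ite_eq' s i (fun j => c j * _), if_pos hi] at h1
  rcases mul_eq_zero.mp h1 with h | h
  · exact h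
  · exact absurd h (by exact_mod_cast Fintype.card_ne_zero (α := G))

lemma sigmaCF_eq_sum {X : Set (G → ℂ)} (hX : X.Finite) (g : G) :
    sigmaCF X g = ∑ χ ∈ hX.toFinset, χ 1 * χ g :=
  finsum_mem_eq_finite_toFinset_sum _ hX

open Classical in
lemma pairB_sigmaCF {X : Set (G → ℂ)} (hX : X.Finite) (hXI : X ⊆ Irr G)
    {f : G → ℂ} (hf : IsIrrChar G f) :
    pairB (sigmaCF X) f = if f ∈ X then f 1 * (Fintype.card G : ℂ) else 0 := by
  have h1 : sigmaCF X = ∑ χ ∈ hX.toFinset, χ 1 • χ := by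
    funext g
    rw [sigmaCF_eq_sum hX g]
    simp
  rw [h1, pairB_finsetsum]
  have h2 : ∀ χ ∈ hX.toFinset, pairB (χ 1 • χ) f
      = if χ = f then χ 1 * (Fintype.card G : ℂ) else 0 := by
    intro χ hχ
    rw [pairB_smul, pairB_irr (hXI (hX.mem_toFinset.mp hχ)) hf]
    split <;> simp
  rw [Finset.sum_congr rfl h2, Finset.sum_ite_eq' hX.toFinset f (fun χ => χ 1 * _)]
  by_cases hfX : f ∈ X
  · rw [if_pos (hX.mem_toFinset.mpr hfX), if_pos hfX]
  · rw [if_neg (fun hc => hfX (hX.mem_toFinset.mp hc)), if_neg hfX]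

open Classical in
lemma stepB {G : Type} [Group G] [Finite G] {𝒳 : Set (Set (G → ℂ))}
    {𝒦 : Set (Set (ConjClasses G))} (h : IsSCT G 𝒳 𝒦)
    {x y : G} (hxy : ∀ X ∈ 𝒳, sigmaCF X x = sigmaCF X y)
    {S : Set (ConjClasses G)} (hS : S ∈ 𝒦) (hx : ConjClasses.mk x ∈ S) :
    ConjClasses.mk y ∈ S := by
  letI : Fintype G := Fintype.ofFinite G
  have hXsub : ∀ X ∈ 𝒳, X ⊆ Irr G := by
    intro X hX f hf; rw [← h.unionX]; exact ⟨X, hX, hf⟩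
  have hXfin : 𝒳.Finite :=
    Set.Finite.subset (Set.Finite.finite_subsets (irr_finite (G := G))) (fun X hX => hXsub X hX)
  have hKfin : 𝒦.Finite := Set.toFinite 𝒦
  haveI := hXfin.fintype
  haveI := hKfin.fintype
  have hrepex : ∀ T : ↥𝒦, ∃ z : G, ConjClasses.mk z ∈ (T : Set (ConjClasses G)) := by
    intro T
    obtain ⟨K, hK⟩ := h.nonemptyK T T.2
    obtain ⟨z, rfl⟩ := ConjClasses.exists_rep K
    exact ⟨z, hK⟩
  choose rep hrep using hrepex
  set v : ↥𝒳 → (↥𝒦 → ℂ) := fun X T => sigmaCF (X : Set (G → ℂ)) (rep T) with hvdef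
  have hval : ∀ (X : ↥𝒳) (T : ↥𝒦) (z : G), ConjClasses.mk z ∈ (T : Set (ConjClasses G)) →
      sigmaCF (X : Set (G → ℂ)) z = v X T := by
    intro X T z hz
    exact h.consistentPairs X X.2 T T.2 z (rep T) hz (hrep T)
  have hσli : LinearIndependent ℂ (fun X : ↥𝒳 => sigmaCF (X : Set (G → ℂ))) := by
    rw [Fintype.linearIndependent_iff]
    intro c hc X₀
    obtain ⟨f, hf⟩ := h.nonemptyX X₀ X₀.2
    have hfI : IsIrrChar G f := hXsub X₀ X₀.2 hf
    have h0 : pairB (∑ X : ↥𝒳, c X • sigmaCF (X : Set (G → ℂ))) f = 0 := by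
      rw [hc, pairB_zero]
    rw [pairB_finsetsum] at h0
    simp only [pairB_smul] at h0
    have h2 : ∀ X ∈ (Finset.univ : Finset ↥𝒳), c X * pairB (sigmaCF (X : Set (G → ℂ))) f
        = if X = X₀ then c X * (f 1 * (Fintype.card G : ℂ)) else 0 := by
      intro X _
      have hfin : (X : Set (G → ℂ)).Finite := irr_finite.subset (hXsub X X.2)
      rw [pairB_sigmaCF hfin (hXsub X X.2) hfI]
      by_cases hX : X = X₀
      · subst hX; rw [if_pos hf, if_pos rfl]
      · have hfn : f ∉ (X : Set (G → ℂ)) := by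
          intro hfX
          have hd := h.pairwiseX X.2 X₀.2 (fun hcc => hX (Subtype.coe_injective hcc))
          exact (Set.disjoint_left.mp hd hfX) hf
        rw [if_neg hfn, if_neg hX, mul_zero]
    rw [Finset.sum_congr rfl h2,
      Finset.sum_ite_eq' Finset.univ X₀ (fun X => c X * (f 1 * (Fintype.card G : ℂ))),
      if_pos (Finset.mem_univ _)] at h0
    rcases mul_eq_zero.mp h0 with hcz | hz
    · exact hcz
    · rcases mul_eq_zero.mp hz with h1 | h1
      · exact absurd h1 (irr_one_ne_zero hfI)
      · exact absurd h1 (by exact_mod_cast Fintype.card_ne_zero (α := G))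
  have hvli : LinearIndependent ℂ v := by
    rw [Fintype.linearIndependent_iff]
    intro c hc X₀
    have hσ0 : ∑ X : ↥𝒳, c X • sigmaCF (X : Set (G → ℂ)) = 0 := by
      funext g
      have hg : ConjClasses.mk g ∈ ⋃₀ 𝒦 := by rw [h.unionK]; trivial
      obtain ⟨T, hT, hgT⟩ := hg
      have hcT := congrFun hc (⟨T, hT⟩ : ↥𝒦)
      simp only [Finset.sum_apply, Pi.smul_apply, smul_eq_mul, Pi.zero_apply] at hcT ⊢
      calc ∑ X : ↥𝒳, c X * sigmaCF (X : Set (G → ℂ)) g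
          = ∑ X : ↥𝒳, c X * v X ⟨T, hT⟩ := by
            refine Finset.sum_congr rfl fun X _ => ?_
            rw [hval X ⟨T, hT⟩ g hgT]
        _ = 0 := hcT
    exact (Fintype.linearIndependent_iff.mp hσli) c hσ0 X₀
  have hKne : 𝒦.Nonempty := ⟨_, h.idClassMem⟩
  have hXne : 𝒳.Nonempty := by
    apply Set.nonempty_of_ncard_ne_zero
    rw [h.cardEq]
    exact ((Set.ncard_pos hKfin).mpr hKne).ne'
  haveI : Nonempty ↥𝒳 := hXne.to_subtype
  have hcard : Fintype.card ↥𝒳 = Module.finrank ℂ (↥𝒦 → ℂ) := by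
    rw [Module.finrank_pi, ← Nat.card_eq_fintype_card, ← Nat.card_eq_fintype_card,
      Nat.card_coe_set_eq, Nat.card_coe_set_eq]
    exact h.cardEq
  let b := basisOfLinearIndependentOfCardEqFinrank hvli hcard
  have hb : ⇑b = v := coe_basisOfLinearIndependentOfCardEqFinrank hvli hcard
  obtain ⟨T', hT', hyT'⟩ : ∃ T' ∈ 𝒦, ConjClasses.mk y ∈ T' := by
    have hg : ConjClasses.mk y ∈ ⋃₀ 𝒦 := by rw [h.unionK]; trivial
    obtain ⟨T, hT, hgT⟩ := hg
    exact ⟨T, hT, hgT⟩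
  set δ : ↥𝒦 → ℂ := fun T => if (T : Set (ConjClasses G)) = S then 1 else 0 with hδdef
  have hrepr := b.sum_repr δ
  have e1 := congrFun hrepr ⟨S, hS⟩
  have e2 := congrFun hrepr ⟨T', hT'⟩
  have hLHS : ((∑ i, b.repr δ i • b i) ⟨S, hS⟩ : ℂ) = (∑ i, b.repr δ i • b i) ⟨T', hT'⟩ := by
    simp only [Finset.sum_apply, Pi.smul_apply, smul_eq_mul]
    refine Finset.sum_congr rfl fun X _ => ?_
    rw [hb]
    rw [← hval X ⟨S, hS⟩ x hx, ← hval X ⟨T', hT'⟩ y hyT', hxy X X.2]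
  have hδeq : δ ⟨S, hS⟩ = δ ⟨T', hT'⟩ := by rw [← e1, ← e2, hLHS]
  have h1 : δ ⟨S, hS⟩ = 1 := if_pos rfl
  have h2 : (T' : Set (ConjClasses G)) = S := by
    by_contra hne
    rw [h1, hδdef] at hδeq
    simp only [if_neg hne] at hδeq
    exact one_ne_zero hδeq
  rw [← h2]
  exact hyT'

/-- a partition of `Irr(G)` admits at most one partition of `Con(G)` making the
pair a supercharacter theory. -/
theorem stmt_4 {G : Type} [Group G] [Finite G]
    (𝒳 : Set (Set (G → ℂ))) (𝒦 𝒦' : Set (Set (ConjClasses G)))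
    (h : IsSCT G 𝒳 𝒦) (h' : IsSCT G 𝒳 𝒦') :
    𝒦 = 𝒦' := by
  have key : ∀ (𝒦₁ 𝒦₂ : Set (Set (ConjClasses G))), IsSCT G 𝒳 𝒦₁ → IsSCT G 𝒳 𝒦₂ → 𝒦₁ ⊆ 𝒦₂ := by
    intro 𝒦₁ 𝒦₂ h1 h2 S hS
    obtain ⟨K₀, hK₀⟩ := h1.nonemptyK S hS
    obtain ⟨x₀, rfl⟩ := ConjClasses.exists_rep K₀
    obtain ⟨S', hS', hx₀'⟩ : ∃ S' ∈ 𝒦₂, ConjClasses.mk x₀ ∈ S' := by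
      have hm : ConjClasses.mk x₀ ∈ ⋃₀ 𝒦₂ := by rw [h2.unionK]; trivial
      obtain ⟨T, hT, hmm⟩ := hm
      exact ⟨T, hT, hmm⟩
    have hSS' : S = S' := by
      apply Set.eq_of_subset_of_subset
      · intro K hK
        obtain ⟨y, rfl⟩ := ConjClasses.exists_rep K
        exact stepB h2 (fun X hX => h1.consistentPairs X hX S hS x₀ y hK₀ hK) hS' hx₀'
      · intro K hK
        obtain ⟨y, rfl⟩ := ConjClasses.exists_rep K
        exact stepB h1 (fun X hX => h2.consistentPairs X hX S' hS' x₀ y hx₀' hK) hS hK₀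
    rw [hSS']
    exact hS'
  exact Set.eq_of_subset_of_subset (key 𝒦 𝒦' h h') (key 𝒦' 𝒦 h' h)
end

section
/- Let a : ℕ → ℕ satisfy a(0) = 1 and a(n+1) = a(n) + ∑_{i=0}^{n} C(n, i)·(a(i) + 1) for every n ≥ 0, where C(n, i) denotes the binomial coefficient. Then a(n) = 2·B(n+1) − 1 for every n ≥ 0, where B(n) is the n-th Bell number. -/
open scoped BigOperators

open Finset
open Finset

section SetoidAux

variable {α β : Type}

/-- Transfer setoids along an equivalence of types. -/
def setoidCongr (e : α ≃ β) : Setoid α ≃ Setoid β where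
  toFun r := Setoid.comap e.symm r
  invFun r := Setoid.comap e r
  left_inv r := Setoid.ext fun x y => by
    simp [Setoid.comap_rel]
  right_inv r := Setoid.ext fun x y => by
    simp [Setoid.comap_rel]

lemma natcard_setoid_congr (e : α ≃ β) : Nat.card (Setoid α) = Nat.card (Setoid β) :=
  Nat.card_congr (setoidCongr e)

instance setoidFinite [Finite α] : Finite (Setoid α) :=
  Finite.of_injective (fun r : Setoid α => r.r) fun a b h =>
    Setoid.ext fun x y => iff_of_eq (congrFun (congrFun h x) y)

end SetoidAux

section Glue

variable {α : Type}

/-- The relation on `Option α` glued from a subset `s` (the block of `none`)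
and a setoid on the complement of `s`. -/
def glueRel (s : Finset α) (t : Setoid {a : α // a ∉ s}) :
    Option α → Option α → Prop
  | none, none => True
  | none, some b => b ∈ s
  | some a, none => a ∈ s
  | some a, some b => (a ∈ s ∧ b ∈ s) ∨ ∃ (ha : a ∉ s) (hb : b ∉ s), t.r ⟨a, ha⟩ ⟨b, hb⟩

def glueSetoid (s : Finset α) (t : Setoid {a : α // a ∉ s}) : Setoid (Option α) where
  r := glueRel s t
  iseqv := by
    constructor
    · rintro (_ | a)
      · trivial
      · by_cases ha : a ∈ s
        · exact Or.inl ⟨ha, ha⟩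
        · exact Or.inr ⟨ha, ha, t.refl _⟩
    · rintro (_ | a) (_ | b) h
      · trivial
      · exact h
      · exact h
      · rcases h with ⟨ha, hb⟩ | ⟨ha, hb, h⟩
        · exact Or.inl ⟨hb, ha⟩
        · exact Or.inr ⟨hb, ha, t.symm h⟩
    · rintro (_ | a) (_ | b) (_ | c) h1 h2
      · trivial
      · exact h2
      · trivial
      · rcases h2 with ⟨hb, hc⟩ | ⟨hb, _, _⟩
        · exact hc
        · exact absurd h1 hb
      · exact h1
      · exact Or.inl ⟨h1, h2⟩
      · rcases h1 with ⟨ha, _⟩ | ⟨_, hb, _⟩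
        · exact ha
        · exact absurd h2 hb
      · rcases h1 with ⟨ha, hb⟩ | ⟨ha, hb, h⟩
        · rcases h2 with ⟨_, hc⟩ | ⟨hb', _, _⟩
          · exact Or.inl ⟨ha, hc⟩
          · exact absurd hb hb'
        · rcases h2 with ⟨hb', _⟩ | ⟨hb', hc, h'⟩
          · exact absurd hb' hb
          · exact Or.inr ⟨ha, hc, t.trans h h'⟩

open scoped Classical in
/-- Splitting a setoid on `Option α` into the block of `none` and a setoid on the rest. -/
noncomputable def splitEquiv (α : Type) [Fintype α] :
    Setoid (Option α) ≃ Σ s : Finset α, Setoid {a : α // a ∉ s} where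
  toFun r := ⟨Finset.univ.filter (fun a => r.r (some a) none),
    Setoid.comap (fun x => some x.1) r⟩
  invFun p := glueSetoid p.1 p.2
  left_inv r := by
    apply Setoid.ext
    rintro (_ | a) (_ | b)
    · exact iff_of_true trivial (r.refl _)
    · show (b ∈ Finset.univ.filter _) ↔ _
      simp only [mem_filter, mem_univ, true_and]
      exact ⟨fun h => r.symm h, fun h => r.symm h⟩
    · show (a ∈ Finset.univ.filter _) ↔ _
      simp only [mem_filter, mem_univ, true_and]
    · show ((a ∈ Finset.univ.filter _ ∧ b ∈ Finset.univ.filter _) ∨ _) ↔ _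
      simp only [mem_filter, mem_univ, true_and]
      constructor
      · rintro (⟨ha, hb⟩ | ⟨_, _, h⟩)
        · exact r.trans ha (r.symm hb)
        · exact h
      · intro h
        by_cases ha : r.r (some a) none
        · exact Or.inl ⟨ha, r.trans (r.symm h) ha⟩
        · refine Or.inr ⟨ha, fun hb => ha (r.trans h hb), h⟩
  right_inv := by
    rintro ⟨s, t⟩
    have hs : Finset.univ.filter (fun a => (glueSetoid s t).r (some a) none) = s := by
      ext a
      simp only [mem_filter, mem_univ, true_and]
      exact Iff.rfl
    refine Sigma.ext hs ?_
    -- HEq of setoids over equal finsets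
    have : ∀ (s₁ s₂ : Finset α) (h : s₁ = s₂)
        (t₁ : Setoid {a : α // a ∉ s₁}) (t₂ : Setoid {a : α // a ∉ s₂}),
        (∀ a (ha₁ : a ∉ s₁) (ha₂ : a ∉ s₂) b (hb₁ : b ∉ s₁) (hb₂ : b ∉ s₂),
          t₁.r ⟨a, ha₁⟩ ⟨b, hb₁⟩ ↔ t₂.r ⟨a, ha₂⟩ ⟨b, hb₂⟩) → HEq t₁ t₂ := by
      rintro s₁ s₂ rfl t₁ t₂ h
      refine heq_of_eq (Setoid.ext ?_)
      rintro ⟨a, ha⟩ ⟨b, hb⟩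
      exact h a ha ha b hb hb
    refine this _ _ hs _ _ ?_
    intro a ha₁ ha₂ b hb₁ hb₂
    show glueRel s t (some a) (some b) ↔ _
    constructor
    · rintro (⟨ha, _⟩ | ⟨ha, hb, h⟩)
      · exact absurd ha ha₂
      · exact h
    · intro h
      exact Or.inr ⟨ha₂, hb₂, h⟩

end Glue

lemma natcard_sigma {ι : Type} [Fintype ι] (f : ι → Type) [∀ i, Finite (f i)] :
    Nat.card (Σ i, f i) = ∑ i, Nat.card (f i) := by
  have : ∀ i, Fintype (f i) := fun i => Fintype.ofFinite (f i)
  simp only [Nat.card_eq_fintype_card]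
  exact Fintype.card_sigma

lemma isSetPartition_iff {α : Type} (P : Set (Set α)) :
    IsSetPartition P ↔ Setoid.IsPartition P := by
  constructor
  · rintro ⟨h1, h2, h3⟩
    refine ⟨fun hemp => (h1 _ hemp).ne_empty rfl, fun a => ?_⟩
    have ha : a ∈ ⋃₀ P := h3 ▸ Set.mem_univ a
    obtain ⟨b, hbP, hab⟩ := ha
    refine ⟨b, ⟨hbP, hab⟩, ?_⟩
    rintro c ⟨hcP, hac⟩
    by_contra hne
    exact Set.disjoint_left.mp (h2 hcP hbP hne) hac hab
  · rintro ⟨hemp, hu⟩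
    refine ⟨fun A hA => ?_, ?_, ?_⟩
    · rcases Set.eq_empty_or_nonempty A with rfl | h
      · exact absurd hA hemp
      · exact h
    · intro A hA B hB hne
      rw [Set.disjoint_left]
      intro a haA haB
      obtain ⟨b, _, hbu⟩ := hu a
      exact hne ((hbu A ⟨hA, haA⟩).trans (hbu B ⟨hB, haB⟩).symm)
    · apply Set.eq_univ_of_forall
      intro x
      obtain ⟨b, ⟨hb, hxb⟩, _⟩ := hu x
      exact ⟨b, hb, hxb⟩

lemma bell_card (n : ℕ) : bell n = Nat.card (Setoid (Fin n)) := by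
  apply Nat.card_congr
  exact (Equiv.subtypeEquivRight isSetPartition_iff).trans
    (Setoid.Partition.orderIso (Fin n)).toEquiv.symm

lemma bell_zero : bell 0 = 1 := by
  rw [bell_card]
  have h1 : Subsingleton (Setoid (Fin 0)) :=
    ⟨fun r r' => Setoid.ext fun x => x.elim0⟩
  have h2 : Nonempty (Setoid (Fin 0)) := ⟨⟨Eq, eq_equivalence⟩⟩
  exact Nat.card_eq_one_iff_unique.mpr ⟨h1, h2⟩

lemma bell_succ (n : ℕ) :
    bell (n + 1) = ∑ i ∈ Finset.range (n + 1), Nat.choose n i * bell i := by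
  have h1 : bell (n + 1) = Nat.card (Setoid (Option (Fin n))) := by
    rw [bell_card]
    exact natcard_setoid_congr (finSuccEquiv n)
  rw [h1, Nat.card_congr (splitEquiv (Fin n)), natcard_sigma]
  have hterm : ∀ s : Finset (Fin n),
      Nat.card (Setoid {a : Fin n // a ∉ s}) = bell (n - s.card) := by
    intro s
    rw [bell_card]
    refine natcard_setoid_congr (Fintype.equivFinOfCardEq ?_)
    rw [Fintype.card_subtype_compl]
    simp
  calc ∑ s : Finset (Fin n), Nat.card (Setoid {a : Fin n // a ∉ s})
      = ∑ s : Finset (Fin n), bell (n - s.card) := by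
        exact Finset.sum_congr rfl fun s _ => hterm s
    _ = ∑ s ∈ (Finset.univ : Finset (Fin n)).powerset, bell (n - s.card) := by
        rw [Finset.powerset_univ]
    _ = ∑ k ∈ Finset.range (n + 1), ∑ s ∈ Finset.powersetCard k Finset.univ,
          bell (n - s.card) := by
        rw [Finset.powerset_card_biUnion, Finset.sum_biUnion, Finset.card_fin]
        exact (Finset.pairwise_disjoint_powersetCard _).set_pairwise _
    _ = ∑ k ∈ Finset.range (n + 1), Nat.choose n k * bell (n - k) := by
        refine Finset.sum_congr rfl fun k _ => ?_
        rw [Finset.sum_congr rfl (fun (s : Finset (Fin n)) hs => by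
          rw [(Finset.mem_powersetCard.mp hs).2]), Finset.sum_const,
          Finset.card_powersetCard, Finset.card_fin, smul_eq_mul]
    _ = ∑ i ∈ Finset.range (n + 1), Nat.choose n i * bell i := by
        rw [← Finset.sum_range_reflect]
        refine Finset.sum_congr rfl fun k hk => ?_
        have hk' : k ≤ n := Nat.lt_succ_iff.mp (Finset.mem_range.mp hk)
        rw [Nat.add_sub_cancel, Nat.choose_symm hk', Nat.sub_sub_self hk']

lemma bell_one : bell 1 = 1 := by
  rw [bell_succ]
  simp [bell_zero]

lemma bell_step (n : ℕ) :
    bell (n + 2) = bell (n + 1) + ∑ i ∈ Finset.range (n + 1),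
      Nat.choose n i * bell (i + 1) := by
  have h1 := bell_succ (n + 1)
  rw [Finset.sum_range_succ'] at h1
  have h2 : ∀ i, Nat.choose (n + 1) (i + 1) = Nat.choose n i + Nat.choose n (i + 1) :=
    fun i => Nat.choose_succ_succ n i
  have h3 : ∑ i ∈ Finset.range (n + 1), Nat.choose (n + 1) (i + 1) * bell (i + 1)
      = ∑ i ∈ Finset.range (n + 1), Nat.choose n i * bell (i + 1)
        + ∑ i ∈ Finset.range (n + 1), Nat.choose n (i + 1) * bell (i + 1) := by
    rw [← Finset.sum_add_distrib]
    exact Finset.sum_congr rfl fun i _ => by rw [h2 i, add_mul]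
  have h4 : ∑ i ∈ Finset.range (n + 1), Nat.choose n (i + 1) * bell (i + 1)
      + Nat.choose n 0 * bell 0 = bell (n + 1) := by
    rw [← Finset.sum_range_succ' (fun i => Nat.choose n i * bell i) (n + 1),
      Finset.sum_range_succ, Nat.choose_succ_self, zero_mul, add_zero, bell_succ n]
  simp only [Nat.choose_zero_right, one_mul, bell_zero, mul_one,
    show n + 1 + 1 = n + 2 from rfl] at h1 h3 h4 ⊢
  omega


/-- if `a 0 = 1` and `a (n+1) = a n + ∑_{i=0}^{n} C(n,i)·(a i + 1)`,
then `a n = 2·B(n+1) - 1` for all `n`. -/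
theorem stmt_9 (a : ℕ → ℕ) (h0 : a 0 = 1)
    (hrec : ∀ n : ℕ,
      a (n + 1) = a n + ∑ i ∈ Finset.range (n + 1), Nat.choose n i * (a i + 1)) :
    ∀ n : ℕ, a n = 2 * bell (n + 1) - 1 := by
  have key : ∀ n : ℕ, a n + 1 = 2 * bell (n + 1) := by
    intro n
    induction n using Nat.strong_induction_on with
    | _ n ih =>
      match n with
      | 0 => rw [h0, bell_one]
      | Nat.succ m =>
        have hsum : ∑ i ∈ Finset.range (m + 1), Nat.choose m i * (a i + 1)
            = 2 * ∑ i ∈ Finset.range (m + 1), Nat.choose m i * bell (i + 1) := by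
          rw [Finset.mul_sum]
          refine Finset.sum_congr rfl fun i hi => ?_
          rw [ih i (Nat.lt_succ_of_le (Nat.lt_succ_iff.mp (Finset.mem_range.mp hi)))]
          ring
        have hm := ih m (Nat.lt_succ_self m)
        have hstep := bell_step m
        rw [hrec m, hsum]
        have h2 : m + 1 + 1 = m + 2 := rfl
        rw [h2]
        omega
  intro n
  have := key n
  omega
end
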